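/- Let G be a finite abelian group and let B^{(1)}, …, B^{(k)} be Bohr sets in G, B^{(i)} = B(Γ_i, ε^{(i)}). Then |B^{(1)} ∩ ⋯ ∩ B^{(k)}| / |G| ≥ ∏_{i=1}^{k} |B^{(i)}_{1/2}| / |G|, where B^{(i)}_{1/2} = B(Γ_i, ε^{(i)}/2). -/

import Mathlib

/-- For `z` on the unit circle, `‖z‖ = |arg z| / (2π)`. -/
noncomputable def bohrNorm (z : ℂ) : ℝ := |Complex.arg z| / (2 * Real.pi)

open Classical in
/-- The Bohr set `B(Γ, ε) = {n ∈ G : ‖γ(n)‖ < ε_γ for all γ ∈ Γ}`. -/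
noncomputable def bohrSet {G : Type*} [AddCommGroup G] [Fintype G]
    (Γ : Finset (AddChar G ℂ)) (ε : AddChar G ℂ → ℝ) : Finset G :=
  Finset.univ.filter fun n => ∀ γ ∈ Γ, bohrNorm (γ n) < ε γ

/-- A Bohr set `B(Γ, ε)` of dimension `d = |Γ|` is regular if for all `η` with
`d|η| ≤ 1/100` one has `(1 − 100d|η|)|B_1| < |B_{1+η}| < (1 + 100d|η|)|B_1|`. -/
def IsRegularBohr {G : Type*} [AddCommGroup G] [Fintype G]
    (Γ : Finset (AddChar G ℂ)) (ε : AddChar G ℂ → ℝ) : Prop :=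
  ∀ η : ℝ, (Γ.card : ℝ) * |η| ≤ 1 / 100 →
    (1 - 100 * Γ.card * |η|) * (bohrSet Γ ε).card
        < ((bohrSet Γ (fun γ => (1 + η) * ε γ)).card : ℝ) ∧
    ((bohrSet Γ (fun γ => (1 + η) * ε γ)).card : ℝ)
        < (1 + 100 * Γ.card * |η|) * (bohrSet Γ ε).card

open Classical in
/-- Indicator function of a finite set, real-valued. -/
noncomputable def indic {G : Type*} (B : Finset G) : G → ℝ := fun x => if x ∈ B then 1 else 0

/-- Normalized indicator (uniform measure) of a finite set. -/
noncomputable def muFn {G : Type*} (B : Finset G) : G → ℝ := fun x => indic B x / B.card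

/-- Convolution `(f ∗ g)(x) = ∑_y f(y) g(x − y)` on a finite abelian group. -/
noncomputable def conv {G : Type*} [AddCommGroup G] [Fintype G] (f g : G → ℝ) : G → ℝ :=
  fun x => ∑ y, f y * g (x - y)

open Real in
lemma bohrNorm_mul_le {z w : ℂ} (hz : z ≠ 0) (hw : w ≠ 0) :
    bohrNorm (z * w) ≤ bohrNorm z + bohrNorm w := by
  unfold bohrNorm
  rw [← add_div]
  have hpi := Real.pi_pos
  apply div_le_div_of_nonneg_right ?_ (by positivity)
  have h := Complex.arg_mul_coe_angle hz hw
  rw [← Real.Angle.coe_add, Real.Angle.angle_eq_iff_two_pi_dvd_sub] at h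
  obtain ⟨m, hm⟩ := h
  have ha := Complex.abs_arg_le_pi (z * w)
  have htri : |Complex.arg z + Complex.arg w| ≤ |Complex.arg z| + |Complex.arg w| :=
    abs_add_le _ _
  rcases eq_or_ne m 0 with h0 | h0
  · have : Complex.arg (z * w) = Complex.arg z + Complex.arg w := by
      rw [h0] at hm; push_cast at hm; linarith
    rw [this]; exact htri
  · have hm1 : (1 : ℝ) ≤ |(m : ℝ)| := by
      exact_mod_cast Int.one_le_abs (by exact_mod_cast h0)
    have h2 : |Complex.arg z + Complex.arg w| ≥ π := by
      have : Complex.arg z + Complex.arg w = Complex.arg (z * w) - 2 * π * m := by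
        linarith
      rw [this]
      calc π = 2 * π * 1 - π := by ring
        _ ≤ |2 * π * (m:ℝ)| - |Complex.arg (z * w)| := by
            rw [abs_mul, abs_mul]
            have : |(2:ℝ)| * |π| = 2 * π := by
              rw [abs_of_pos (by norm_num : (0:ℝ) < 2), abs_of_pos hpi]
            rw [this]
            nlinarith
        _ ≤ |Complex.arg (z * w) - 2 * π * m| := by
            have := abs_sub_abs_le_abs_sub (2 * π * (m:ℝ)) (Complex.arg (z * w))
            rw [abs_sub_comm] at this
            linarith
    linarith

lemma addChar_ne_zero {G : Type*} [AddCommGroup G] (γ : AddChar G ℂ) (a : G) : γ a ≠ 0 :=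
  (γ.val_isUnit a).ne_zero

open Classical in
lemma sub_mem_bohrSet {G : Type*} [AddCommGroup G] [Fintype G]
    {Γ : Finset (AddChar G ℂ)} {ε : AddChar G ℂ → ℝ} {a b : G}
    (ha : a ∈ bohrSet Γ (fun γ => ε γ / 2)) (hb : b ∈ bohrSet Γ (fun γ => ε γ / 2)) :
    a - b ∈ bohrSet Γ ε := by
  simp only [bohrSet, Finset.mem_filter, Finset.mem_univ, true_and] at ha hb ⊢
  intro γ hγ
  have h1 := ha γ hγ
  have h2 := hb γ hγ
  have hrw : γ (a - b) = γ a * (γ b)⁻¹ := by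
    rw [sub_eq_add_neg, AddChar.map_add_eq_mul, AddChar.map_neg_eq_inv]
  have hle : bohrNorm (γ (a - b)) ≤ bohrNorm (γ a) + bohrNorm ((γ b)⁻¹) := by
    rw [hrw]
    exact bohrNorm_mul_le (addChar_ne_zero γ a) (inv_ne_zero (addChar_ne_zero γ b))
  have hinv : bohrNorm ((γ b)⁻¹) = bohrNorm (γ b) := by
    unfold bohrNorm; rw [Complex.abs_arg_inv]
  rw [hinv] at hle
  linarith


open Classical in
/-- Intersection bound for Bohr sets:
`μ_G(B⁽¹⁾ ∩ ⋯ ∩ B⁽ᵏ⁾) ≥ ∏ᵢ μ_G(B⁽ⁱ⁾_{1/2})`. -/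
theorem bohrSet_inter_card {G : Type*} [AddCommGroup G] [Fintype G]
    (k : ℕ) (Γ : Fin k → Finset (AddChar G ℂ)) (ε : Fin k → (AddChar G ℂ → ℝ))
    (hε : ∀ i, ∀ γ ∈ Γ i, 0 < ε i γ ∧ ε i γ ≤ 1) :
    ∏ i, ((bohrSet (Γ i) (fun γ => ε i γ / 2)).card : ℝ) / (Fintype.card G : ℝ) ≤
      (((Finset.univ.filter fun n => ∀ i, n ∈ bohrSet (Γ i) (ε i)).card : ℝ)) /
        (Fintype.card G : ℝ) := by
  classical
  set X : Fin k → Finset G := fun i => bohrSet (Γ i) (fun γ => ε i γ / 2) with hXdef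
  set S : Finset G := Finset.univ.filter fun n => ∀ i, n ∈ bohrSet (Γ i) (ε i) with hSdef
  have hGpos : (0 : ℝ) < Fintype.card G := by
    exact_mod_cast Fintype.card_pos
  set a : Fin k → G → ℝ := fun i x => if x ∈ X i then 1 else 0 with hadef
  have ha_nonneg : ∀ i x, 0 ≤ a i x := fun i x => by
    simp only [hadef]; split <;> norm_num
  have ha_le_one : ∀ i x, a i x ≤ 1 := fun i x => by
    simp only [hadef]; split <;> norm_num
  have ha_sum : ∀ i (u : G), ∑ t : G, a i (u + t) = ((X i).card : ℝ) := by
    intro i u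
    have he : ∑ t : G, a i (u + t) = ∑ w : G, a i w :=
      Fintype.sum_equiv (Equiv.addLeft u) _ _ (fun t => rfl)
    rw [he]
    simp [hadef, Finset.sum_ite_mem]
  set A : (Fin k → G) → ℝ := fun s => ∑ u : G, ∏ i, a i (u + s i) with hAdef
  set P : ℝ := ∏ i, ((X i).card : ℝ) with hPdef
  have hPnonneg : 0 ≤ P := Finset.prod_nonneg fun i _ => by positivity
  -- (1) sum of A
  have h1 : ∑ s : Fin k → G, A s = (Fintype.card G : ℝ) * P := by
    rw [Finset.sum_comm]
    have : ∀ u : G, ∑ s : Fin k → G, ∏ i, a i (u + s i) = P := by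
      intro u
      rw [← Fintype.prod_sum (fun i t => a i (u + t))]
      exact Finset.prod_congr rfl fun i _ => ha_sum i u
    rw [Finset.sum_congr rfl fun u _ => this u]
    simp [Finset.card_univ, mul_comm]
  -- correlation function
  set c : G → G → Fin k → ℝ := fun u v i => ∑ t : G, a i (u + t) * a i (v + t) with hcdef
  have hc_nonneg : ∀ u v i, 0 ≤ c u v i := fun u v i =>
    Finset.sum_nonneg fun t _ => mul_nonneg (ha_nonneg _ _) (ha_nonneg _ _)
  have hc_le : ∀ u v i, c u v i ≤ ((X i).card : ℝ) := by
    intro u v i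
    calc c u v i ≤ ∑ t : G, a i (u + t) := by
          apply Finset.sum_le_sum
          intro t _
          calc a i (u + t) * a i (v + t) ≤ a i (u + t) * 1 :=
                mul_le_mul_of_nonneg_left (ha_le_one _ _) (ha_nonneg _ _)
            _ = a i (u + t) := mul_one _
      _ = ((X i).card : ℝ) := ha_sum i u
  have hc_zero : ∀ u v, u - v ∉ S → ∃ i, c u v i = 0 := by
    intro u v huv
    simp only [hSdef, Finset.mem_filter, Finset.mem_univ, true_and, not_forall] at huv
    obtain ⟨i, hi⟩ := huv
    refine ⟨i, Finset.sum_eq_zero fun t _ => ?_⟩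
    by_contra hne
    have h1 : a i (u + t) = 1 ∧ a i (v + t) = 1 := by
      simp only [hadef] at hne ⊢
      constructor <;> split <;> first | rfl | (exfalso; apply hne; simp_all)
    have hu : u + t ∈ X i := by
      by_contra h; simp only [hadef, if_neg h] at h1; exact one_ne_zero h1.1.symm
    have hv : v + t ∈ X i := by
      by_contra h; simp only [hadef, if_neg h] at h1; exact one_ne_zero h1.2.symm
    apply hi
    have : (u + t) - (v + t) = u - v := by abel
    rw [← this]
    exact sub_mem_bohrSet hu hv
  -- (2) sum of A^2
  have h2 : ∑ s : Fin k → G, (A s) ^ 2 ≤ (Fintype.card G : ℝ) * (S.card : ℝ) * P := by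
    have expand : ∀ s : Fin k → G, (A s) ^ 2 =
        ∑ u : G, ∑ v : G, ∏ i, (a i (u + s i) * a i (v + s i)) := by
      intro s
      rw [sq, hAdef]
      rw [Finset.sum_mul_sum]
      exact Finset.sum_congr rfl fun u _ => Finset.sum_congr rfl fun v _ =>
        (Finset.prod_mul_distrib).symm
    calc ∑ s : Fin k → G, (A s) ^ 2
        = ∑ u : G, ∑ v : G, ∏ i, c u v i := by
          rw [Finset.sum_congr rfl fun s _ => expand s]
          rw [Finset.sum_comm]
          refine Finset.sum_congr rfl fun u _ => ?_
          rw [Finset.sum_comm]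
          refine Finset.sum_congr rfl fun v _ => ?_
          rw [← Fintype.prod_sum (fun i t => a i (u + t) * a i (v + t))]
      _ ≤ ∑ u : G, ∑ v : G, (if u - v ∈ S then (1:ℝ) else 0) * P := by
          refine Finset.sum_le_sum fun u _ => Finset.sum_le_sum fun v _ => ?_
          by_cases h : u - v ∈ S
          · rw [if_pos h, one_mul, hPdef]
            exact Finset.prod_le_prod (fun i _ => hc_nonneg u v i) (fun i _ => hc_le u v i)
          · obtain ⟨i, hi⟩ := hc_zero u v h
            rw [if_neg h, zero_mul]
            rw [Finset.prod_eq_zero (Finset.mem_univ i) hi]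
      _ = (Fintype.card G : ℝ) * (S.card : ℝ) * P := by
          have : ∀ u : G, ∑ v : G, (if u - v ∈ S then (1:ℝ) else 0) = (S.card : ℝ) := by
            intro u
            have he : ∑ v : G, (if u - v ∈ S then (1:ℝ) else 0)
                = ∑ w : G, (if w ∈ S then (1:ℝ) else 0) :=
              Fintype.sum_equiv (Equiv.subLeft u) _ _ (fun t => rfl)
            rw [he]
            simp [Finset.sum_ite_mem]
          simp only [← Finset.sum_mul]
          rw [Finset.sum_congr rfl fun u _ => this u]
          simp [Finset.card_univ]
  -- Cauchy-Schwarz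
  have h3 : (∑ s : Fin k → G, A s) ^ 2 ≤
      ((Fintype.card G : ℝ) ^ k) * ∑ s : Fin k → G, (A s) ^ 2 := by
    have := sq_sum_le_card_mul_sum_sq (s := (Finset.univ : Finset (Fin k → G))) (f := A)
    have hcard : ((Finset.univ : Finset (Fin k → G)).card : ℝ) = (Fintype.card G : ℝ) ^ k := by
      rw [Finset.card_univ]
      rw [Fintype.card_fun]
      push_cast
      simp
    calc (∑ s : Fin k → G, A s) ^ 2
        ≤ ((Finset.univ : Finset (Fin k → G)).card : ℝ) * ∑ s : Fin k → G, (A s) ^ 2 := by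
          exact_mod_cast this
      _ = ((Fintype.card G : ℝ) ^ k) * ∑ s : Fin k → G, (A s) ^ 2 := by rw [hcard]
  -- combine
  have key : ((Fintype.card G : ℝ) * P) ^ 2 ≤
      (Fintype.card G : ℝ) ^ k * ((Fintype.card G : ℝ) * (S.card : ℝ) * P) := by
    rw [← h1]
    refine h3.trans ?_
    have hsum2 : 0 ≤ ∑ s : Fin k → G, (A s) ^ 2 := Finset.sum_nonneg fun s _ => sq_nonneg _
    exact mul_le_mul_of_nonneg_left h2 (by positivity)
  -- final
  have goal_eq : ∏ i, ((X i).card : ℝ) / (Fintype.card G : ℝ) = P / (Fintype.card G : ℝ) ^ k := by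
    rw [Finset.prod_div_distrib, hPdef]
    congr 1
    rw [Finset.prod_const, Finset.card_univ, Fintype.card_fin]
  rw [goal_eq]
  rw [div_le_div_iff₀ (by positivity) hGpos]
  rcases eq_or_lt_of_le hPnonneg with hP0 | hPpos
  · rw [← hP0, zero_mul]
    positivity
  · have := key
    nlinarith [key, mul_pos hGpos hPpos, pow_pos hGpos k,
      mul_pos (mul_pos hGpos hPpos) (pow_pos hGpos k)]
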